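/- Let N ≡ 1 (mod 4) be a positive integer. For every positive integer m there exist integers x̄₁, x̄₂, ȳ₁, ȳ₂ with x̄₁² + x̄₂² − N(ȳ₁² + ȳ₂²) ≡ −1 (mod m). -/

import Mathlib

/-- Solvability of `x² + y² + 1 ≡ 0` modulo odd prime powers, with a unit coordinate. -/
lemma odd_prime_case (p : ℕ) (hp : p.Prime) (hodd : p ≠ 2) :
    ∀ n : ℕ, ∃ x y : ℤ, (p : ℤ) ^ (n + 1) ∣ x ^ 2 + y ^ 2 + 1 ∧ ¬ ((p:ℤ) ∣ x ∧ (p:ℤ) ∣ y) := by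
  haveI : Fact p.Prime := ⟨hp⟩
  intro n
  induction n with
  | zero =>
    obtain ⟨a, b, hab⟩ := ZMod.sq_add_sq p (-1 : ZMod p)
    have h1 : (p : ℤ) ∣ ((a.val : ℤ))^2 + ((b.val:ℤ))^2 + 1 := by
      rw [← ZMod.intCast_zmod_eq_zero_iff_dvd]
      push_cast
      simp only [ZMod.natCast_val, ZMod.cast_id]
      rw [hab]; ring
    refine ⟨(a.val : ℤ), (b.val : ℤ), by simpa using h1, ?_⟩
    rintro ⟨hx, hy⟩
    have h2 : (p : ℤ) ∣ 1 := by
      have := dvd_sub h1 (dvd_add (dvd_pow hx two_ne_zero) (dvd_pow hy two_ne_zero))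
      simpa using this
    have := Int.le_of_dvd one_pos h2
    have := hp.two_le
    omega
  | succ n ih =>
    obtain ⟨x, y, hdvd, hxy⟩ := ih
    have key : ∀ x y : ℤ, (p : ℤ) ^ (n + 1) ∣ x ^ 2 + y ^ 2 + 1 → ¬ (p:ℤ) ∣ x →
        ∃ x' y' : ℤ, (p : ℤ) ^ (n + 1 + 1) ∣ x' ^ 2 + y' ^ 2 + 1 ∧
          ¬ ((p:ℤ) ∣ x' ∧ (p:ℤ) ∣ y') := by
      intro x y hdvd hx
      obtain ⟨s, hs⟩ := hdvd
      have hx0 : ((2 * x : ℤ) : ZMod p) ≠ 0 := by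
        rw [Ne, ZMod.intCast_zmod_eq_zero_iff_dvd]
        intro h
        rcases (Int.Prime.dvd_mul' hp h) with h2 | h2
        · have : p ∣ 2 := by exact_mod_cast h2
          exact hodd ((Nat.prime_dvd_prime_iff_eq hp Nat.prime_two).mp this)
        · exact hx h2
      obtain ⟨t, ht⟩ : ∃ t : ℤ, (p:ℤ) ∣ s + 2 * t * x := by
        refine ⟨((- (s : ZMod p) / ((2 * x : ℤ) : ZMod p)).cast : ℤ), ?_⟩
        rw [← ZMod.intCast_zmod_eq_zero_iff_dvd]
        push_cast
        push_cast at hx0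
        field_simp
        rw [div_self hx0]
        ring
      obtain ⟨u, hu⟩ := ht
      refine ⟨x + t * (p:ℤ)^(n+1), y, ⟨u + t^2 * (p:ℤ)^n, ?_⟩, ?_⟩
      · linear_combination hs + (p:ℤ)^(n+1) * hu
      · rintro ⟨hx', _⟩
        apply hx
        have hdt : (p:ℤ) ∣ t * (p:ℤ)^(n+1) :=
          Dvd.dvd.mul_left (dvd_pow_self _ (Nat.succ_ne_zero n)) t
        simpa using dvd_sub hx' hdt
    rcases Decidable.not_and_iff_or_not.mp hxy with hx | hy
    · exact key x y hdvd hx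
    · obtain ⟨x', y', h1, h2⟩ := key y x (by convert hdvd using 2; ring) hy
      exact ⟨x', y', h1, h2⟩

/-- Solvability of `N (c² + d²) ≡ 1` modulo powers of 2, when `N ≡ 1 (mod 4)`. -/
lemma two_case (N : ℤ) (h4 : (4:ℤ) ∣ N - 1) :
    ∀ n : ℕ, ∃ c d : ℤ, (2:ℤ) ^ (n + 3) ∣ N * (c ^ 2 + d ^ 2) - 1 ∧ Odd c := by
  obtain ⟨k, hk⟩ := h4
  have hN : N = 4 * k + 1 := by omega
  intro n
  induction n with
  | zero =>
    rcases Int.even_or_odd k with ⟨j, hj⟩ | ⟨j, hj⟩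
    · exact ⟨1, 0, ⟨j, by subst hN hj; ring⟩, odd_one⟩
    · exact ⟨1, 2, ⟨5 * j + 3, by subst hN hj; ring⟩, odd_one⟩
  | succ n ih =>
    obtain ⟨c, d, ⟨s, hs⟩, hc⟩ := ih
    have hNodd : Odd N := ⟨2 * k, by omega⟩
    have hNc : Odd (N * c) := hNodd.mul hc
    obtain ⟨w, hw⟩ := hNc
    -- use t = s ; 1 + N c is even
    refine ⟨c + s * (2:ℤ)^(n+2), d, ⟨s * (w + 1) + N * s^2 * (2:ℤ)^n, ?_⟩, ?_⟩
    · linear_combination hs + (2:ℤ)^(n+3) * s * hw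
    · obtain ⟨v, hv⟩ := hc
      exact ⟨v + s * (2:ℤ)^(n+1), by rw [hv]; ring⟩

/-- The congruence is solvable in `ZMod m` for every positive `m`. -/
lemma zmod_key (N : ℤ) (h4 : (4:ℤ) ∣ N - 1) :
    ∀ m : ℕ, 0 < m → ∃ a b c d : ZMod m,
      a ^ 2 + b ^ 2 - (N : ZMod m) * (c ^ 2 + d ^ 2) = -1 := by
  intro m
  induction m using Nat.recOnPosPrimePosCoprime with
  | prime_pow p n hp hn =>
    intro _
    have hp' : p.Prime := by first | exact hp | exact Nat.prime_iff.mpr hp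
    by_cases h2 : p = 2
    · subst h2
      obtain ⟨c, d, hdvd, -⟩ := two_case N h4 n
      have hdvd' : (2:ℤ) ^ n ∣ N * (c ^ 2 + d ^ 2) - 1 :=
        dvd_trans (pow_dvd_pow 2 (by omega)) hdvd
      refine ⟨0, 0, (c : ZMod (2^n)), (d : ZMod (2^n)), ?_⟩
      have : ((N * (c ^ 2 + d ^ 2) - 1 : ℤ) : ZMod (2^n)) = 0 := by
        rw [ZMod.intCast_zmod_eq_zero_iff_dvd]
        exact_mod_cast hdvd'
      push_cast at this
      linear_combination -this
    · obtain ⟨x, y, hdvd, -⟩ := odd_prime_case p hp' h2 (n - 1)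
      have hdvd' : (p:ℤ) ^ n ∣ x ^ 2 + y ^ 2 + 1 := by
        have : n - 1 + 1 = n := by omega
        rwa [this] at hdvd
      refine ⟨(x : ZMod (p^n)), (y : ZMod (p^n)), 0, 0, ?_⟩
      have : ((x ^ 2 + y ^ 2 + 1 : ℤ) : ZMod (p^n)) = 0 := by
        rw [ZMod.intCast_zmod_eq_zero_iff_dvd]
        exact_mod_cast hdvd'
      push_cast at this
      linear_combination this
  | zero => intro h; omega
  | one => exact fun _ => ⟨0, 0, 0, 0, Subsingleton.elim _ _⟩
  | coprime a b ha1 hb1 hab iha ihb =>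
    intro _
    obtain ⟨a₁, b₁, c₁, d₁, h₁⟩ := iha (by omega)
    obtain ⟨a₂, b₂, c₂, d₂, h₂⟩ := ihb (by omega)
    let e := ZMod.chineseRemainder hab
    refine ⟨e.symm (a₁, a₂), e.symm (b₁, b₂), e.symm (c₁, c₂), e.symm (d₁, d₂), ?_⟩
    apply e.injective
    simp only [map_sub, map_add, map_mul, map_pow, map_intCast, map_neg, map_one,
      RingEquiv.apply_symm_apply]
    ext <;> simp [h₁, h₂]

theorem stmt_8 (N : ℤ) (hNpos : 0 < N) (hN : N ≡ 1 [ZMOD 4]) (m : ℕ) (hm : 0 < m) :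
    ∃ x₁ x₂ y₁ y₂ : ℤ,
      x₁ ^ 2 + x₂ ^ 2 - N * (y₁ ^ 2 + y₂ ^ 2) ≡ -1 [ZMOD (m : ℤ)] := by
  have h4 : (4:ℤ) ∣ N - 1 := Int.ModEq.dvd hN.symm
  obtain ⟨a, b, c, d, h⟩ := zmod_key N h4 m hm
  refine ⟨(a.cast : ℤ), (b.cast : ℤ), (c.cast : ℤ), (d.cast : ℤ), ?_⟩
  rw [← ZMod.intCast_eq_intCast_iff]
  push_cast
  exact h
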